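/- Let k be a field of characteristic ≠ 2 and let A be a 4-dimensional unital k-algebra. Then A is an associative division algebra with center equal to k·1 admitting a Kleinian pair if and only if A is a division algebra admitting a non-degenerate quadratic form q : A → k that is multiplicative, i.e., q(x·y) = q(x)·q(y) for all x, y ∈ A (in other words, A is a 4-dimensional Hurwitz division algebra over k). -/

import Mathlib

open Module Function

variable {k : Type} [Field k]

/-- A Kleinian pair for a nonassociative `k`-algebra `(A, mul)`: a pair of distinct commuting
automorphisms, each of order 2. -/
def IsKleinPair {A : Type} [AddCommGroup A] [Module k A]
    (mul : A →ₗ[k] A →ₗ[k] A) (α β : A ≃ₗ[k] A) : Prop :=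
  (∀ x y : A, α (mul x y) = mul (α x) (α y)) ∧
  (∀ x y : A, β (mul x y) = mul (β x) (β y)) ∧
  (∀ x : A, α (α x) = x) ∧ (∀ x : A, β (β x) = x) ∧
  (∀ x : A, α (β x) = β (α x)) ∧
  α ≠ LinearEquiv.refl k A ∧ β ≠ LinearEquiv.refl k A ∧ α ≠ β


section QuatSection
variable {A : Type} [AddCommGroup A] [Module k A]
variable {mul : A →ₗ[k] A →ₗ[k] A} {one : A}

structure QuatData (k : Type) [Field k] (A : Type) [AddCommGroup A] [Module k A]
    (mul : A →ₗ[k] A →ₗ[k] A) (one : A) : Type where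
  a : k
  b : k
  ha : a ≠ 0
  hb : b ≠ 0
  e : Basis (Fin 4) k A
  he0 : e 0 = one
  t11 : mul (e 1) (e 1) = a • e 0
  t12 : mul (e 1) (e 2) = e 3
  t13 : mul (e 1) (e 3) = a • e 2
  t21 : mul (e 2) (e 1) = -(e 3)
  t22 : mul (e 2) (e 2) = b • e 0
  t23 : mul (e 2) (e 3) = -(b • e 1)
  t31 : mul (e 3) (e 1) = -(a • e 2)
  t32 : mul (e 3) (e 2) = b • e 1
  t33 : mul (e 3) (e 3) = -((a*b) • e 0)

namespace QuatData

variable (D : QuatData k A mul one)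

theorem h0l (hone : ∀ x : A, mul one x = x ∧ mul x one = x) (p : Fin 4) :
    mul (D.e 0) (D.e p) = D.e p := by rw [D.he0]; exact (hone _).1
theorem h0r (hone : ∀ x : A, mul one x = x ∧ mul x one = x) (p : Fin 4) :
    mul (D.e p) (D.e 0) = D.e p := by rw [D.he0]; exact (hone _).2

theorem mul_expand (hone : ∀ x : A, mul one x = x ∧ mul x one = x)
    (c0 c1 c2 c3 d0 d1 d2 d3 : k) :
    mul (c0 • D.e 0 + c1 • D.e 1 + c2 • D.e 2 + c3 • D.e 3)
        (d0 • D.e 0 + d1 • D.e 1 + d2 • D.e 2 + d3 • D.e 3) =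
      (c0*d0 + D.a*(c1*d1) + D.b*(c2*d2) - D.a*D.b*(c3*d3)) • D.e 0
    + (c0*d1 + c1*d0 - D.b*(c2*d3) + D.b*(c3*d2)) • D.e 1
    + (c0*d2 + c2*d0 + D.a*(c1*d3) - D.a*(c3*d1)) • D.e 2
    + (c0*d3 + c3*d0 + c1*d2 - c2*d1) • D.e 3 := by
  simp only [map_add, map_smul, LinearMap.add_apply, LinearMap.smul_apply,
    D.t11, D.t12, D.t13, D.t21, D.t22, D.t23, D.t31, D.t32, D.t33, D.h0l hone, D.h0r hone,
    smul_neg, smul_smul]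
  module

theorem combo_eq (x : A) :
    ∃ c0 c1 c2 c3 : k, x = c0 • D.e 0 + c1 • D.e 1 + c2 • D.e 2 + c3 • D.e 3 := by
  refine ⟨D.e.repr x 0, D.e.repr x 1, D.e.repr x 2, D.e.repr x 3, ?_⟩
  have := D.e.sum_repr x
  rw [Fin.sum_univ_four] at this
  exact this.symm

theorem repr_combo (c0 c1 c2 c3 : k) (r : Fin 4) :
    D.e.repr (c0 • D.e 0 + c1 • D.e 1 + c2 • D.e 2 + c3 • D.e 3) r
      = ![c0, c1, c2, c3] r := by
  simp only [map_add, map_smul, Basis.repr_self, Finsupp.coe_add, Finsupp.coe_smul,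
    Pi.add_apply, Pi.smul_apply, smul_eq_mul]
  fin_cases r <;> simp [Finsupp.single_apply]

/-- The norm bilinear form. -/
noncomputable def B : LinearMap.BilinMap k A k :=
  LinearMap.mk₂ k
    (fun x y => D.e.repr x 0 * D.e.repr y 0 - D.a * (D.e.repr x 1 * D.e.repr y 1)
      - D.b * (D.e.repr x 2 * D.e.repr y 2) + D.a * D.b * (D.e.repr x 3 * D.e.repr y 3))
    (by intro m₁ m₂ n; simp; ring) (by intro c m n; simp; ring)
    (by intro m n₁ n₂; simp; ring) (by intro c m n; simp; ring)

theorem B_apply (x y : A) : D.B x y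
    = D.e.repr x 0 * D.e.repr y 0 - D.a * (D.e.repr x 1 * D.e.repr y 1)
      - D.b * (D.e.repr x 2 * D.e.repr y 2) + D.a * D.b * (D.e.repr x 3 * D.e.repr y 3) := rfl

noncomputable def Q : QuadraticForm k A := D.B.toQuadraticMap

theorem Q_apply (x : A) : D.Q x = D.B x x := rfl

theorem polar_Q (x y : A) : QuadraticMap.polar (⇑D.Q) x y = D.B x y + D.B y x := by
  simp only [QuadraticMap.polar, Q_apply, B_apply, map_add, LinearMap.add_apply,
    Finsupp.coe_add, Pi.add_apply]
  ring

theorem Q_combo (c0 c1 c2 c3 : k) :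
    D.Q (c0 • D.e 0 + c1 • D.e 1 + c2 • D.e 2 + c3 • D.e 3)
      = c0 * c0 - D.a * (c1 * c1) - D.b * (c2 * c2) + D.a * D.b * (c3 * c3) := by
  rw [Q_apply, B_apply]
  simp only [repr_combo]
  norm_num [Matrix.cons_val_zero, Matrix.cons_val_one, Matrix.cons_val_two, Matrix.cons_val_three,
    Matrix.head_cons, Matrix.tail_cons]

theorem Q_nondeg (hchar : (2:k) ≠ 0) :
    ∀ x : A, (∀ y : A, QuadraticMap.polar (⇑D.Q) x y = 0) → x = 0 := by
  intro x hx
  have h0 := hx (D.e 0); have h1 := hx (D.e 1); have h2 := hx (D.e 2); have h3 := hx (D.e 3)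
  simp [polar_Q, B_apply, Basis.repr_self, Finsupp.single_apply] at h0 h1 h2 h3
  have e0 : D.e.repr x 0 = 0 :=
    (mul_eq_zero.mp (show (2:k) * D.e.repr x 0 = 0 by linear_combination h0)).resolve_left hchar
  have e1 : D.e.repr x 1 = 0 :=
    (mul_eq_zero.mp (show (2 * D.a) * D.e.repr x 1 = 0 by linear_combination -h1)).resolve_left
      (mul_ne_zero hchar D.ha)
  have e2 : D.e.repr x 2 = 0 :=
    (mul_eq_zero.mp (show (2 * D.b) * D.e.repr x 2 = 0 by linear_combination -h2)).resolve_left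
      (mul_ne_zero hchar D.hb)
  have e3 : D.e.repr x 3 = 0 :=
    (mul_eq_zero.mp (show (2 * (D.a * D.b)) * D.e.repr x 3 = 0 by linear_combination h3)).resolve_left
      (mul_ne_zero hchar (mul_ne_zero D.ha D.hb))
  have hr : D.e.repr x = 0 := by
    ext p; fin_cases p <;> simpa using (by assumption : _)
  have := congrArg D.e.repr.symm hr
  simpa using this

theorem Q_mul (hone : ∀ x : A, mul one x = x ∧ mul x one = x) (x y : A) :
    D.Q (mul x y) = D.Q x * D.Q y := by
  obtain ⟨c0, c1, c2, c3, rfl⟩ := D.combo_eq x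
  obtain ⟨d0, d1, d2, d3, rfl⟩ := D.combo_eq y
  rw [D.mul_expand hone, Q_combo, Q_combo, Q_combo]
  ring

noncomputable def alphaL : A →ₗ[k] A := D.e.constr k ![D.e 0, D.e 1, -(D.e 2), -(D.e 3)]
noncomputable def betaL : A →ₗ[k] A := D.e.constr k ![D.e 0, -(D.e 1), D.e 2, -(D.e 3)]

theorem alphaL_apply (p : Fin 4) :
    D.alphaL (D.e p) = ![D.e 0, D.e 1, -(D.e 2), -(D.e 3)] p := D.e.constr_basis k _ p
theorem betaL_apply (p : Fin 4) :
    D.betaL (D.e p) = ![D.e 0, -(D.e 1), D.e 2, -(D.e 3)] p := D.e.constr_basis k _ p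

theorem alphaL_invol : Function.Involutive D.alphaL := by
  intro x
  obtain ⟨c0, c1, c2, c3, rfl⟩ := D.combo_eq x
  simp [map_add, map_smul, alphaL_apply]
theorem betaL_invol : Function.Involutive D.betaL := by
  intro x
  obtain ⟨c0, c1, c2, c3, rfl⟩ := D.combo_eq x
  simp [map_add, map_smul, betaL_apply]

theorem ext2 {N : Type} [AddCommGroup N] [Module k N] {F G : A →ₗ[k] A →ₗ[k] N}
    (h : ∀ p q : Fin 4, F (D.e p) (D.e q) = G (D.e p) (D.e q)) : F = G :=
  D.e.ext fun p => D.e.ext fun q => h p q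

theorem key_alpha (hone : ∀ x : A, mul one x = x ∧ mul x one = x) (p q : Fin 4) :
    D.alphaL (mul (D.e p) (D.e q)) = mul (D.alphaL (D.e p)) (D.alphaL (D.e q)) := by
  fin_cases p <;> fin_cases q <;>
    simp [alphaL_apply, D.t11, D.t12, D.t13, D.t21, D.t22, D.t23, D.t31, D.t32, D.t33,
      D.h0l hone, D.h0r hone, map_smul, map_neg, smul_neg]

theorem key_beta (hone : ∀ x : A, mul one x = x ∧ mul x one = x) (p q : Fin 4) :
    D.betaL (mul (D.e p) (D.e q)) = mul (D.betaL (D.e p)) (D.betaL (D.e q)) := by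
  fin_cases p <;> fin_cases q <;>
    simp [betaL_apply, D.t11, D.t12, D.t13, D.t21, D.t22, D.t23, D.t31, D.t32, D.t33,
      D.h0l hone, D.h0r hone, map_smul, map_neg, smul_neg]

theorem alphaL_mul (hone : ∀ x : A, mul one x = x ∧ mul x one = x) (x y : A) :
    D.alphaL (mul x y) = mul (D.alphaL x) (D.alphaL y) := by
  have h : mul.compr₂ D.alphaL = (mul.comp D.alphaL).compl₂ D.alphaL :=
    D.ext2 fun p q => by
      simpa using D.key_alpha hone p q
  simpa using LinearMap.congr_fun (LinearMap.congr_fun h x) y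

theorem betaL_mul (hone : ∀ x : A, mul one x = x ∧ mul x one = x) (x y : A) :
    D.betaL (mul x y) = mul (D.betaL x) (D.betaL y) := by
  have h : mul.compr₂ D.betaL = (mul.comp D.betaL).compl₂ D.betaL :=
    D.ext2 fun p q => by
      simpa using D.key_beta hone p q
  simpa using LinearMap.congr_fun (LinearMap.congr_fun h x) y

theorem alphaL_comm_betaL (x : A) : D.alphaL (D.betaL x) = D.betaL (D.alphaL x) := by
  obtain ⟨c0, c1, c2, c3, rfl⟩ := D.combo_eq x
  simp [map_add, map_smul, alphaL_apply, betaL_apply]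

noncomputable def alphaE : A ≃ₗ[k] A := LinearEquiv.ofInvolutive D.alphaL D.alphaL_invol
noncomputable def betaE : A ≃ₗ[k] A := LinearEquiv.ofInvolutive D.betaL D.betaL_invol

theorem ne_of_val {f g : A ≃ₗ[k] A} {x : A} (h : f x ≠ g x) : f ≠ g := fun hh => h (by rw [hh])

theorem smul_basis_ne (hchar : (2:k) ≠ 0) (p : Fin 4) : -(D.e p) ≠ D.e p := by
  intro h
  have h2 : (2:k) • D.e p = 0 := by
    rw [two_smul]; nth_rewrite 1 [← h]; abel
  rcases smul_eq_zero.mp h2 with h' | h'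
  · exact hchar h'
  · exact D.e.ne_zero p h'

theorem center_eq (D : QuatData k A mul one) (hchar : (2:k) ≠ 0) (hone : ∀ x : A, mul one x = x ∧ mul x one = x) :
    {z : A | ∀ x : A, mul z x = mul x z} = Set.range (fun s : k => s • one) := by
  ext z
  constructor
  · intro hz
    obtain ⟨c0, c1, c2, c3, rfl⟩ := D.combo_eq z
    have he1 : (0:k) • D.e 0 + (1:k) • D.e 1 + (0:k) • D.e 2 + (0:k) • D.e 3 = D.e 1 := by
      module
    have he2 : (0:k) • D.e 0 + (0:k) • D.e 1 + (1:k) • D.e 2 + (0:k) • D.e 3 = D.e 2 := by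
      module
    have hXe1 := D.mul_expand hone c0 c1 c2 c3 0 1 0 0
    rw [he1] at hXe1
    have he1X := D.mul_expand hone 0 1 0 0 c0 c1 c2 c3
    rw [he1] at he1X
    have hXe2 := D.mul_expand hone c0 c1 c2 c3 0 0 1 0
    rw [he2] at hXe2
    have he2X := D.mul_expand hone 0 0 1 0 c0 c1 c2 c3
    rw [he2] at he2X
    have h1 := hz (D.e 1); rw [hXe1, he1X] at h1
    have h2 := hz (D.e 2); rw [hXe2, he2X] at h2
    have h13 := congrArg (fun w => D.e.repr w 3) h1
    have h12 := congrArg (fun w => D.e.repr w 2) h1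
    have h23 := congrArg (fun w => D.e.repr w 3) h2
    simp only [repr_combo] at h13 h12 h23
    norm_num [Matrix.cons_val_two, Matrix.cons_val_three, Matrix.head_cons, Matrix.tail_cons]
      at h13 h12 h23
    have hc2 : c2 = 0 := by
      have h : (2:k) * c2 = 0 := by linear_combination -h13
      exact (mul_eq_zero.mp h).resolve_left hchar
    have hc3 : c3 = 0 := by
      have h : ((2:k)*D.a) * c3 = 0 := by linear_combination -h12
      exact (mul_eq_zero.mp h).resolve_left (mul_ne_zero hchar D.ha)
    have hc1 : c1 = 0 := by
      have h : (2:k) * c1 = 0 := by linear_combination h23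
      exact (mul_eq_zero.mp h).resolve_left hchar
    refine ⟨c0, ?_⟩
    show c0 • one = _
    simp only [hc1, hc2, hc3, zero_smul, add_zero]
    rw [D.he0]
  · rintro ⟨s, rfl⟩
    intro x
    simp only [map_smul, LinearMap.smul_apply]
    rw [(hone x).1, (hone x).2]


theorem t0 (D : QuatData k A mul one) (hone : ∀ x : A, mul one x = x ∧ mul x one = x)
    (p : Fin 4) : mul (D.e 0) (D.e p) = D.e p ∧ mul (D.e p) (D.e 0) = D.e p := by
  rw [D.he0]; exact ⟨(hone _).1, (hone _).2⟩

theorem key (D : QuatData k A mul one) (hone : ∀ x : A, mul one x = x ∧ mul x one = x)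
    (p q r : Fin 4) :
    mul (mul (D.e p) (D.e q)) (D.e r) = mul (D.e p) (mul (D.e q) (D.e r)) := by
  have h0l : ∀ p, mul (D.e 0) (D.e p) = D.e p := fun p => (D.t0 hone p).1
  have h0r : ∀ p, mul (D.e p) (D.e 0) = D.e p := fun p => (D.t0 hone p).2
  fin_cases p <;> fin_cases q <;> fin_cases r <;>
    simp only [show (⟨0, by norm_num⟩ : Fin 4) = 0 from rfl,
      show (⟨1, by norm_num⟩ : Fin 4) = 1 from rfl,
      show (⟨2, by norm_num⟩ : Fin 4) = 2 from rfl,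
      show (⟨3, by norm_num⟩ : Fin 4) = 3 from rfl,
      h0l, h0r, D.t11, D.t12, D.t13, D.t21, D.t22, D.t23, D.t31, D.t32, D.t33,
      map_smul, map_neg, LinearMap.smul_apply, LinearMap.neg_apply,
      smul_neg, neg_neg, smul_smul] <;>
    first
      | rfl
      | module

theorem assoc (D : QuatData k A mul one) (hone : ∀ x : A, mul one x = x ∧ mul x one = x) :
    ∀ x y z : A, mul (mul x y) z = mul x (mul y z) := by
  have h1 : ∀ (q r : Fin 4),
      (mul.flip (D.e r)).comp (mul.flip (D.e q)) = mul.flip (mul (D.e q) (D.e r)) :=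
    fun q r => D.e.ext fun p => D.key hone p q r
  have h1' : ∀ (x : A) (q r : Fin 4),
      mul (mul x (D.e q)) (D.e r) = mul x (mul (D.e q) (D.e r)) := fun x q r =>
    LinearMap.congr_fun (h1 q r) x
  have h2 : ∀ (x : A) (r : Fin 4),
      (mul.flip (D.e r)).comp (mul x) = (mul.flip (D.e r)).comp (mul x) ∘ₗ LinearMap.id := by
    intro x r; rfl
  have h2' : ∀ (x : A) (r : Fin 4),
      (mul.flip (D.e r)).comp (mul x) = (mul x).comp (mul.flip (D.e r)) := fun x r =>
    D.e.ext fun q => h1' x q r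
  have h2'' : ∀ (x y : A) (r : Fin 4),
      mul (mul x y) (D.e r) = mul x (mul y (D.e r)) := fun x y r =>
    LinearMap.congr_fun (h2' x r) y
  intro x y z
  exact LinearMap.congr_fun (D.e.ext (fun r => h2'' x y r) :
    mul (mul x y) = (mul x).comp (mul y)) z


theorem klein_exists (D : QuatData k A mul one) (hchar : (2:k) ≠ 0)
    (hone : ∀ x : A, mul one x = x ∧ mul x one = x) :
    ∃ α β : A ≃ₗ[k] A, IsKleinPair mul α β := by
  have hca : ∀ x : A, D.alphaE x = D.alphaL x := fun x => rfl
  have hcb : ∀ x : A, D.betaE x = D.betaL x := fun x => rfl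
  refine ⟨D.alphaE, D.betaE, ?_, ?_, ?_, ?_, ?_, ?_, ?_, ?_⟩
  · intro x y; simp only [hca]; exact D.alphaL_mul hone x y
  · intro x y; simp only [hcb]; exact D.betaL_mul hone x y
  · intro x; simp only [hca]; exact D.alphaL_invol x
  · intro x; simp only [hcb]; exact D.betaL_invol x
  · intro x; simp only [hca, hcb]; exact D.alphaL_comm_betaL x
  · intro h
    have h2 := DFunLike.congr_fun h (D.e 2)
    simp only [hca, LinearEquiv.refl_apply] at h2
    rw [D.alphaL_apply] at h2
    exact D.smul_basis_ne hchar 2 (by simpa using h2)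
  · intro h
    have h2 := DFunLike.congr_fun h (D.e 1)
    simp only [hcb, LinearEquiv.refl_apply] at h2
    rw [D.betaL_apply] at h2
    exact D.smul_basis_ne hchar 1 (by simpa using h2)
  · intro h
    have h2 := DFunLike.congr_fun h (D.e 1)
    simp only [hca, hcb] at h2
    rw [D.alphaL_apply, D.betaL_apply] at h2
    exact D.smul_basis_ne hchar 1 (by simpa using h2.symm)

theorem ofCentral [FiniteDimensional k A] (hchar : (2:k) ≠ 0) (h4 : finrank k A = 4)
    (hone : ∀ x : A, mul one x = x ∧ mul x one = x)
    (hassoc : ∀ x y z : A, mul (mul x y) z = mul x (mul y z))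
    (hdiv : ∀ a : A, a ≠ 0 →
      Function.Bijective (fun x => mul a x) ∧ Function.Bijective (fun x => mul x a))
    (hcen : {z : A | ∀ x : A, mul z x = mul x z} = Set.range (fun s : k => s • one))
    (α β : A ≃ₗ[k] A) (hkp : IsKleinPair mul α β) :
    Nonempty (QuatData k A mul one) := by
  obtain ⟨hα, hβ, hα2, hβ2, hcm, hαr, hβr, hαβ⟩ := hkp
  have hA : Nontrivial A := Module.nontrivial_of_finrank_pos (by omega : 0 < finrank k A)
  have hone0 : one ≠ (0 : A) := by
    intro h
    obtain ⟨x, hx⟩ := exists_ne (0 : A)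
    apply hx
    have := (hone x).1
    rw [h] at this
    simpa using this.symm
  have noZero : ∀ x y : A, x ≠ 0 → y ≠ 0 → mul x y ≠ 0 := by
    intro x y hx hy h
    apply hy
    have hinj := (hdiv x hx).1.1
    have : mul x y = mul x 0 := by simpa using h
    exact hinj this
  -- α and β fix the unit
  have hα1 : α one = one := by
    have hao : α one ≠ 0 := fun h0 => hone0 (by simpa using α.map_eq_zero_iff.mp h0)
    have h := hα one one
    rw [(hone one).1] at h
    have h2 : mul (α one) (α one) = mul (α one) one := by
      rw [← h, (hone (α one)).2]
    exact (hdiv (α one) hao).1.1 h2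
  have hβ1 : β one = one := by
    have hao : β one ≠ 0 := fun h0 => hone0 (by simpa using β.map_eq_zero_iff.mp h0)
    have h := hβ one one
    rw [(hone one).1] at h
    have h2 : mul (β one) (β one) = mul (β one) one := by
      rw [← h, (hone (β one)).2]
    exact (hdiv (β one) hao).1.1 h2
  -- eigencomponents
  have eig01 : ∀ x : A, α (x + α x - β x - α (β x)) = x + α x - β x - α (β x)
      ∧ β (x + α x - β x - α (β x)) = -(x + α x - β x - α (β x)) := by
    intro x
    constructor
    · simp only [map_add, map_sub, hcm, hα2]
      abel
    · simp only [map_add, map_sub, ← hcm, hβ2]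
      abel
  have eig10 : ∀ x : A, α (x - α x + β x - α (β x)) = -(x - α x + β x - α (β x))
      ∧ β (x - α x + β x - α (β x)) = x - α x + β x - α (β x) := by
    intro x
    constructor
    · simp only [map_add, map_sub, hcm, hα2]
      abel
    · simp only [map_add, map_sub, ← hcm, hβ2]
      abel
  have eig11 : ∀ x : A, α (x - α x - β x + α (β x)) = -(x - α x - β x + α (β x))
      ∧ β (x - α x - β x + α (β x)) = -(x - α x - β x + α (β x)) := by
    intro x
    constructor
    · simp only [map_add, map_sub, hcm, hα2]
      abel
    · simp only [map_add, map_sub, ← hcm, hβ2]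
      abel
  -- existence of u (α u = u, β u = -u) and v (α v = -v, β v = v)
  have negneg : ∀ x y : A, mul (-x) (-y) = mul x y := by
    intro x y; rw [LinearMap.map_neg₂, map_neg, neg_neg]
  have negr : ∀ x y : A, mul x (-y) = -(mul x y) := fun x y => map_neg (mul x) y
  have negl : ∀ x y : A, mul (-x) y = -(mul x y) := fun x y => LinearMap.map_neg₂ mul x y
  obtain ⟨u, v, hu0, hαu, hβu, hv0, hαv, hβv⟩ :
      ∃ u v : A, u ≠ 0 ∧ α u = u ∧ β u = -u ∧ v ≠ 0 ∧ α v = -v ∧ β v = v := by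
    by_cases hS01 : ∀ x : A, x + α x - β x - α (β x) = 0
    · have hnS10 : ¬ ∀ x : A, x - α x + β x - α (β x) = 0 := by
        intro hS10
        apply hαβ
        apply LinearEquiv.toLinearMap_injective
        apply LinearMap.ext
        intro x
        have h2 : (2:k) • (α x - β x) = 0 := by
          linear_combination (norm := module) hS01 x - hS10 x
        have h3 := (smul_eq_zero.mp h2).resolve_left hchar
        simpa [sub_eq_zero] using h3
      have hnS11 : ¬ ∀ x : A, x - α x - β x + α (β x) = 0 := by
        intro hS11
        apply hβr
        apply LinearEquiv.toLinearMap_injective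
        apply LinearMap.ext
        intro x
        have h2 : (2:k) • (x - β x) = 0 := by
          linear_combination (norm := module) hS01 x + hS11 x
        have h3 := (smul_eq_zero.mp h2).resolve_left hchar
        have := sub_eq_zero.mp h3
        simpa using this.symm
      obtain ⟨xv, hxv⟩ := not_forall.mp hnS10
      obtain ⟨xw, hxw⟩ := not_forall.mp hnS11
      refine ⟨mul (xv - α xv + β xv - α (β xv)) (xw - α xw - β xw + α (β xw)),
        xv - α xv + β xv - α (β xv), noZero _ _ hxv hxw, ?_, ?_, hxv,
        (eig10 xv).1, (eig10 xv).2⟩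
      · rw [hα, (eig10 xv).1, (eig11 xw).1, negneg]
      · rw [hβ, (eig10 xv).2, (eig11 xw).2, negr]
    · obtain ⟨xu, hxu⟩ := not_forall.mp hS01
      by_cases hS10 : ∀ x : A, x - α x + β x - α (β x) = 0
      · have hnS11 : ¬ ∀ x : A, x - α x - β x + α (β x) = 0 := by
          intro hS11
          apply hαr
          apply LinearEquiv.toLinearMap_injective
          apply LinearMap.ext
          intro x
          have h2 : (2:k) • (x - α x) = 0 := by
            linear_combination (norm := module) hS10 x + hS11 x
          have h3 := (smul_eq_zero.mp h2).resolve_left hchar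
          have := sub_eq_zero.mp h3
          simpa using this.symm
        obtain ⟨xw, hxw⟩ := not_forall.mp hnS11
        refine ⟨xu + α xu - β xu - α (β xu),
          mul (xu + α xu - β xu - α (β xu)) (xw - α xw - β xw + α (β xw)),
          hxu, (eig01 xu).1, (eig01 xu).2, noZero _ _ hxu hxw, ?_, ?_⟩
        · rw [hα, (eig01 xu).1, (eig11 xw).1, negr]
        · rw [hβ, (eig01 xu).2, (eig11 xw).2, negneg]
      · obtain ⟨xv, hxv⟩ := not_forall.mp hS10
        exact ⟨xu + α xu - β xu - α (β xu), xv - α xv + β xv - α (β xv),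
          hxu, (eig01 xu).1, (eig01 xu).2, hxv, (eig10 xv).1, (eig10 xv).2⟩
  -- properties of K := mul u v
  have hαK : α (mul u v) = -(mul u v) := by rw [hα, hαu, hαv, negr]
  have hβK : β (mul u v) = -(mul u v) := by rw [hβ, hβu, hβv, negl]
  have hK0 : mul u v ≠ 0 := noZero u v hu0 hv0
  -- combo expansion lemmas for α, β
  have alpha_combo : ∀ c0 c1 c2 c3 : k,
      α (c0 • one + c1 • u + c2 • v + c3 • mul u v)
        = c0 • one + c1 • u + (-c2) • v + (-c3) • mul u v := by
    intro c0 c1 c2 c3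
    rw [map_add, map_add, map_add, map_smul, map_smul, map_smul, map_smul,
      hα1, hαu, hαv, hαK]
    module
  have beta_combo : ∀ c0 c1 c2 c3 : k,
      β (c0 • one + c1 • u + c2 • v + c3 • mul u v)
        = c0 • one + (-c1) • u + c2 • v + (-c3) • mul u v := by
    intro c0 c1 c2 c3
    rw [map_add, map_add, map_add, map_smul, map_smul, map_smul, map_smul,
      hβ1, hβu, hβv, hβK]
    module
  -- linear independence
  have hli : LinearIndependent k ![one, u, v, mul u v] := by
    rw [Fintype.linearIndependent_iff]
    intro g hg
    rw [Fin.sum_univ_four] at hg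
    simp only [Matrix.cons_val_zero, Matrix.cons_val_one, Matrix.head_cons,
      Matrix.cons_val_two, Matrix.tail_cons, Matrix.cons_val_three] at hg
    have E1 : g 0 • one + g 1 • u + (-(g 2)) • v + (-(g 3)) • mul u v = 0 := by
      have h := congrArg (⇑α) hg
      rw [map_zero, alpha_combo] at h
      exact h
    have E2 : g 0 • one + (-(g 1)) • u + g 2 • v + (-(g 3)) • mul u v = 0 := by
      have h := congrArg (⇑β) hg
      rw [map_zero, beta_combo] at h
      exact h
    have E3 : g 0 • one + (-(g 1)) • u + (-(g 2)) • v + (-(-(g 3))) • mul u v = 0 := by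
      have h := congrArg (⇑β) E1
      rw [map_zero, beta_combo] at h
      exact h
    have hg0 : g 0 = 0 := by
      have h : ((2:k) * 2 * g 0) • one = 0 := by
        linear_combination (norm := module) hg + E1 + E2 + E3
      rcases smul_eq_zero.mp h with h' | h'
      · rcases mul_eq_zero.mp h' with h'' | h''
        · exact absurd h'' (mul_ne_zero hchar hchar)
        · exact h''
      · exact absurd h' hone0
    have hg1 : g 1 = 0 := by
      have h : ((2:k) * 2 * g 1) • u = 0 := by
        linear_combination (norm := module) hg + E1 - E2 - E3
      rcases smul_eq_zero.mp h with h' | h'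
      · rcases mul_eq_zero.mp h' with h'' | h''
        · exact absurd h'' (mul_ne_zero hchar hchar)
        · exact h''
      · exact absurd h' hu0
    have hg2 : g 2 = 0 := by
      have h : ((2:k) * 2 * g 2) • v = 0 := by
        linear_combination (norm := module) hg - E1 + E2 - E3
      rcases smul_eq_zero.mp h with h' | h'
      · rcases mul_eq_zero.mp h' with h'' | h''
        · exact absurd h'' (mul_ne_zero hchar hchar)
        · exact h''
      · exact absurd h' hv0
    have hg3 : g 3 = 0 := by
      have h : ((2:k) * 2 * g 3) • mul u v = 0 := by
        linear_combination (norm := module) hg - E1 - E2 + E3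
      rcases smul_eq_zero.mp h with h' | h'
      · rcases mul_eq_zero.mp h' with h'' | h''
        · exact absurd h'' (mul_ne_zero hchar hchar)
        · exact h''
      · exact absurd h' hK0
    intro p
    fin_cases p <;> assumption
  have hcard : Fintype.card (Fin 4) = finrank k A := by simp [h4]
  let e : Basis (Fin 4) k A := basisOfLinearIndependentOfCardEqFinrank hli hcard
  have he : ⇑e = ![one, u, v, mul u v] :=
    coe_basisOfLinearIndependentOfCardEqFinrank hli hcard
  have he0 : e 0 = one := by rw [he]; rfl
  have he1 : e 1 = u := by rw [he]; rfl
  have he2 : e 2 = v := by rw [he]; rfl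
  have he3 : e 3 = mul u v := by rw [he]; rfl
  have hcombo : ∀ x : A, ∃ c0 c1 c2 c3 : k,
      x = c0 • one + c1 • u + c2 • v + c3 • mul u v := by
    intro x
    refine ⟨e.repr x 0, e.repr x 1, e.repr x 2, e.repr x 3, ?_⟩
    have h := e.sum_repr x
    rw [Fin.sum_univ_four, he0, he1, he2, he3] at h
    exact h.symm
  -- coefficient extraction
  have coeff_zero : ∀ c0 c1 c2 c3 : k,
      c0 • one + c1 • u + c2 • v + c3 • mul u v = 0 →
      c0 = 0 ∧ c1 = 0 ∧ c2 = 0 ∧ c3 = 0 := by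
    intro c0 c1 c2 c3 hc
    rw [← he3, ← he2, ← he1, ← he0] at hc
    have h0 := congrArg (fun w => e.repr w 0) hc
    have h1 := congrArg (fun w => e.repr w 1) hc
    have h2 := congrArg (fun w => e.repr w 2) hc
    have h3 := congrArg (fun w => e.repr w 3) hc
    simp [map_add, map_smul, Basis.repr_self, Finsupp.single_apply] at h0 h1 h2 h3
    exact ⟨h0, h1, h2, h3⟩
  -- u * u is a multiple of one
  have sq_scalar : ∀ w : A, α w = w → β w = w → ∃ s : k, w = s • one := by
    intro w hαw hβw
    obtain ⟨c0, c1, c2, c3, rfl⟩ := hcombo w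
    rw [alpha_combo] at hαw
    rw [beta_combo] at hβw
    have hc23 : ((2:k) * c2) • v + ((2:k) * c3) • mul u v = 0 := by
      linear_combination (norm := module) -hαw
    have hc13 : ((2:k) * c1) • u + ((2:k) * c3) • mul u v = 0 := by
      linear_combination (norm := module) -hβw
    have h23 := coeff_zero 0 0 (2*c2) (2*c3) (by linear_combination (norm := module) hc23)
    have h13 := coeff_zero 0 (2*c1) 0 (2*c3) (by linear_combination (norm := module) hc13)
    have hc2 : c2 = 0 := (mul_eq_zero.mp h23.2.2.1).resolve_left hchar
    have hc3 : c3 = 0 := (mul_eq_zero.mp h23.2.2.2).resolve_left hchar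
    have hc1 : c1 = 0 := (mul_eq_zero.mp h13.2.1).resolve_left hchar
    exact ⟨c0, by rw [hc1, hc2, hc3]; module⟩
  have hαuu : α (mul u u) = mul u u := by rw [hα, hαu]
  have hβuu : β (mul u u) = mul u u := by rw [hβ, hβu, negneg]
  have hαvv : α (mul v v) = mul v v := by rw [hα, hαv, negneg]
  have hβvv : β (mul v v) = mul v v := by rw [hβ, hβv]
  obtain ⟨a, hau⟩ := sq_scalar (mul u u) hαuu hβuu
  obtain ⟨b, hbv⟩ := sq_scalar (mul v v) hαvv hβvv
  have ha0 : a ≠ 0 := by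
    intro h
    apply noZero u u hu0 hu0
    rw [hau, h, zero_smul]
  have hb0 : b ≠ 0 := by
    intro h
    apply noZero v v hv0 hv0
    rw [hbv, h, zero_smul]
  -- v*u is a multiple of K
  obtain ⟨c, hvu⟩ : ∃ c : k, mul v u = c • mul u v := by
    obtain ⟨c0, c1, c2, c3, hw⟩ := hcombo (mul v u)
    have hαvu : α (mul v u) = -(mul v u) := by rw [hα, hαu, hαv, negl]
    have hβvu : β (mul v u) = -(mul v u) := by rw [hβ, hβu, hβv, negr]
    rw [hw] at hαvu hβvu
    rw [alpha_combo] at hαvu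
    rw [beta_combo] at hβvu
    have hc01 : ((2:k) * c0) • one + ((2:k) * c1) • u = 0 := by
      linear_combination (norm := module) hαvu
    have hc02 : ((2:k) * c0) • one + ((2:k) * c2) • v = 0 := by
      linear_combination (norm := module) hβvu
    have h01 := coeff_zero (2*c0) (2*c1) 0 0 (by linear_combination (norm := module) hc01)
    have h02 := coeff_zero (2*c0) 0 (2*c2) 0 (by linear_combination (norm := module) hc02)
    have hc0 : c0 = 0 := (mul_eq_zero.mp h01.1).resolve_left hchar
    have hc1 : c1 = 0 := (mul_eq_zero.mp h01.2.1).resolve_left hchar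
    have hc2 : c2 = 0 := (mul_eq_zero.mp h02.2.2.1).resolve_left hchar
    exact ⟨c3, by rw [hw, hc0, hc1, hc2]; module⟩
  -- key products
  have m_uK : mul u (mul u v) = a • v := by
    rw [← hassoc, hau]
    rw [map_smul, LinearMap.smul_apply, (hone v).1]
  have m_Kv : mul (mul u v) v = b • u := by
    rw [hassoc, hbv]
    rw [map_smul, (hone u).2]
  have m_Ku : mul (mul u v) u = c • (a • v) := by
    rw [hassoc, hvu, map_smul, m_uK]
  have m_vuu : mul (mul v u) u = a • v := by
    rw [hassoc, hau, map_smul, (hone v).2]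
  -- c^2 = 1
  have hc2 : c * c = 1 := by
    have h1 : mul (mul v u) u = (c * (c * a)) • v := by
      rw [hvu, map_smul, LinearMap.smul_apply, m_Ku]
      module
    rw [m_vuu] at h1
    have h2 : (a - c * (c * a)) • v = 0 := by
      rw [sub_smul, h1]; abel
    rcases smul_eq_zero.mp h2 with h' | h'
    · have : a * (1 - c * c) = 0 := by linear_combination h'
      rcases mul_eq_zero.mp this with h'' | h''
      · exact absurd h'' ha0
      · linear_combination -h''
    · exact absurd h' hv0
  -- c = -1 (using the center hypothesis)
  have hcneg : c = -1 := by
    rcases mul_self_eq_one_iff.mp hc2 with h1 | h1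
    · exfalso
      have hucen : u ∈ {z : A | ∀ x : A, mul z x = mul x z} := by
        intro x
        obtain ⟨c0, c1, c2, c3, rfl⟩ := hcombo x
        simp only [map_add, map_smul, LinearMap.add_apply, LinearMap.smul_apply]
        rw [(hone u).2, (hone u).1, hvu, h1, one_smul, m_uK, m_Ku, h1, one_smul]
      rw [hcen] at hucen
      obtain ⟨s, hs⟩ := hucen
      have hβu2 : β u = u := by
        rw [← hs]
        simp only [map_smul, hβ1]
      rw [hβu] at hβu2
      have : (2:k) • u = 0 := by
        rw [two_smul]
        nth_rewrite 1 [← hβu2]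
        abel
      rcases smul_eq_zero.mp this with h' | h'
      · exact hchar h'
      · exact hu0 h'
    · exact h1
  -- assemble
  have m_vK : mul v (mul u v) = -(b • u) := by
    have h : mul v (mul v u) = b • u := by
      rw [← hassoc, hbv, map_smul, LinearMap.smul_apply, (hone u).1]
    rw [hvu, hcneg] at h
    rw [show mul v (mul u v) = -(mul v ((-1 : k) • mul u v)) from by simp, h]
  have m_KK : mul (mul u v) (mul u v) = -((a*b) • one) := by
    rw [hassoc, m_vK]
    rw [map_neg, map_smul, hau]
    rw [smul_smul]
    rw [show b * a = a * b from mul_comm b a]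
  refine ⟨⟨a, b, ha0, hb0, e, he0, ?_, ?_, ?_, ?_, ?_, ?_, ?_, ?_, ?_⟩⟩
  · rw [he1, he0, hau]
  · rw [he1, he2, he3]
  · rw [he1, he2, he3, m_uK]
  · rw [he1, he2, he3, hvu, hcneg] <;> module
  · rw [he2, he0, hbv]
  · rw [he1, he2, he3, m_vK]
  · rw [he1, he2, he3, m_Ku, hcneg] <;> module
  · rw [he1, he2, he3, m_Kv]
  · rw [he3, he0, m_KK]

open QuadraticMap in
theorem ofHurwitz [FiniteDimensional k A] (hchar : (2:k) ≠ 0)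
    (h4 : finrank k A = 4)
    (hone : ∀ x : A, mul one x = x ∧ mul x one = x)
    (hdiv : ∀ a : A, a ≠ 0 →
      Function.Bijective (fun x => mul a x) ∧ Function.Bijective (fun x => mul x a))
    (q : QuadraticForm k A)
    (hnd : ∀ x : A, (∀ y : A, QuadraticMap.polar (⇑q) x y = 0) → x = 0)
    (hmul : ∀ x y : A, q (mul x y) = q x * q y) :
    Nonempty (QuatData k A mul one) := by
  have hA : Nontrivial A := by
    have : 0 < finrank k A := by omega
    exact Module.nontrivial_of_finrank_pos this
  have hone0 : one ≠ (0 : A) := by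
    intro h
    obtain ⟨x, hx⟩ := exists_ne (0 : A)
    apply hx
    have := (hone x).1
    rw [h] at this
    simpa using this.symm
  -- anisotropy
  have haniso : ∀ x : A, x ≠ 0 → q x ≠ 0 := by
    intro x hx hqx
    have hall : ∀ z : A, q z = 0 := by
      intro z
      obtain ⟨y, hy⟩ := (hdiv x hx).1.2 z
      simp only at hy
      rw [← hy, hmul, hqx, zero_mul]
    have : ∀ u : A, u = 0 := by
      intro u
      apply hnd
      intro y
      simp [QuadraticMap.polar, hall]
    exact hx (this x)
  have hq1 : q one = 1 := by
    have h := hmul one one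
    rw [(hone one).1] at h
    have hne := haniso one hone0
    have h1 : q one * q one = q one * 1 := by rw [mul_one, ← h]
    exact mul_left_cancel₀ hne h1
  -- polarized composition laws
  have bmul : ∀ x y z : A, polar (⇑q) (mul x y) (mul x z) = q x * polar (⇑q) y z := by
    intro x y z
    simp only [QuadraticMap.polar, ← map_add, hmul]
    ring
  have brmul : ∀ x y z : A, polar (⇑q) (mul y x) (mul z x) = q x * polar (⇑q) y z := by
    intro x y z
    simp only [QuadraticMap.polar, ← LinearMap.add_apply, ← map_add, hmul]
    ring
  have b4 : ∀ x w y z : A, polar (⇑q) (mul x y) (mul w z) + polar (⇑q) (mul w y) (mul x z)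
      = polar (⇑q) x w * polar (⇑q) y z := by
    intro x w y z
    have h := bmul (x + w) y z
    rw [map_add] at h
    simp only [LinearMap.add_apply, polar_add_left, polar_add_right] at h
    have h1 := bmul x y z
    have h2 := bmul w y z
    have hq : q (x + w) = q x + q w + polar (⇑q) x w := by
      simp only [QuadraticMap.polar]; ring
    rw [hq] at h
    linear_combination h - h1 - h2
  have b4r : ∀ x w y z : A, polar (⇑q) (mul y x) (mul z w) + polar (⇑q) (mul y w) (mul z x)
      = polar (⇑q) x w * polar (⇑q) y z := by
    intro x w y z
    have h := brmul (x + w) y z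
    simp only [map_add, polar_add_left, polar_add_right] at h
    have h1 := brmul x y z
    have h2 := brmul w y z
    have hq : q (x + w) = q x + q w + polar (⇑q) x w := by
      simp only [QuadraticMap.polar]; ring
    rw [hq] at h
    linear_combination h - h1 - h2
  have L1a : ∀ x y z : A, polar (⇑q) (mul x y) z + polar (⇑q) y (mul x z)
      = polar (⇑q) x one * polar (⇑q) y z := by
    intro x y z
    have h := b4 x one y z
    rwa [(hone y).1, (hone z).1] at h
  have L1ar : ∀ x y z : A, polar (⇑q) (mul y x) z + polar (⇑q) y (mul z x)
      = polar (⇑q) x one * polar (⇑q) y z := by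
    intro x y z
    have h := b4r x one y z
    rwa [(hone y).2, (hone z).2] at h
  have bxxz : ∀ x z : A, polar (⇑q) x (mul x z) = q x * polar (⇑q) one z := by
    intro x z
    have h := b4 x x one z
    rw [(hone x).2] at h
    have hself : polar (⇑q) x x = 2 * q x := by
      have h5 := QuadraticMap.polar_self q x
      rw [h5]; push_cast [nsmul_eq_mul]; ring
    rw [hself] at h
    have h2 : (2:k) * (polar (⇑q) x (mul x z)) = 2 * (q x * polar (⇑q) one z) := by
      linear_combination h
    exact mul_left_cancel₀ hchar h2
  have bzxx : ∀ x z : A, polar (⇑q) x (mul z x) = q x * polar (⇑q) one z := by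
    intro x z
    have h := b4r x x one z
    rw [(hone x).1] at h
    have hself : polar (⇑q) x x = 2 * q x := by
      have h5 := QuadraticMap.polar_self q x
      rw [h5]; push_cast [nsmul_eq_mul]; ring
    rw [hself] at h
    have h2 : (2:k) * (polar (⇑q) x (mul z x)) = 2 * (q x * polar (⇑q) one z) := by
      linear_combination h
    exact mul_left_cancel₀ hchar h2
  have L2l : ∀ x y : A, mul x (mul x y) = polar (⇑q) x one • mul x y - q x • y := by
    intro x y
    have key : ∀ z : A,
        polar (⇑q) (mul x (mul x y) - (polar (⇑q) x one • mul x y - q x • y)) z = 0 := by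
      intro z
      have h1 := L1a x (mul x y) z
      have h2 := bmul x y z
      simp only [polar_sub_left, polar_smul_left, smul_eq_mul]
      linear_combination h1 - h2
    have h := hnd _ key
    rwa [sub_eq_zero] at h
  have L2r : ∀ x y : A, mul (mul y x) x = polar (⇑q) x one • mul y x - q x • y := by
    intro x y
    have key : ∀ z : A,
        polar (⇑q) (mul (mul y x) x - (polar (⇑q) x one • mul y x - q x • y)) z = 0 := by
      intro z
      have h1 := L1ar x (mul y x) z
      have h2 := brmul x y z
      simp only [polar_sub_left, polar_smul_left, smul_eq_mul]
      linear_combination h1 - h2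
    have h := hnd _ key
    rwa [sub_eq_zero] at h
  -- pick i with trace 0
  have hker : ∀ (m : Type) (_ : AddCommGroup m) (_ : Module k m) (_ : FiniteDimensional k m)
      (f : A →ₗ[k] m), finrank k m < 4 → ∃ x : A, x ≠ 0 ∧ f x = 0 := by
    intro m _ _ _ f hm
    have hrn := LinearMap.finrank_range_add_finrank_ker f
    have hr : finrank k (LinearMap.range f) ≤ finrank k m := Submodule.finrank_le _
    have hkpos : 0 < finrank k (LinearMap.ker f) := by omega
    have hbot : LinearMap.ker f ≠ ⊥ := by
      intro hb
      rw [hb] at hkpos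
      simp [finrank_bot] at hkpos
    obtain ⟨x, hxm, hx0⟩ := (LinearMap.ker f).exists_mem_ne_zero_of_ne_bot hbot
    exact ⟨x, hx0, LinearMap.mem_ker.mp hxm⟩
  obtain ⟨i, hi0, hti⟩ := hker k inferInstance inferInstance inferInstance ((polarBilin q).flip one) (by simp)
  have hti : polar (⇑q) i one = 0 := hti
  obtain ⟨j, hj0, htj'⟩ := hker (k × k) inferInstance inferInstance inferInstance
    (LinearMap.prod ((polarBilin q).flip one) ((polarBilin q).flip i))
    (by rw [Module.finrank_prod]; simp)
  have htj : polar (⇑q) j one = 0 := congrArg Prod.fst htj'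
  have hbji : polar (⇑q) j i = 0 := congrArg Prod.snd htj'
  have hbij : polar (⇑q) i j = 0 := by rw [polar_comm]; exact hbji
  have hself : ∀ x : A, polar (⇑q) x x = 2 * q x := by
    intro x
    have h5 := QuadraticMap.polar_self q x
    rw [h5]; push_cast [nsmul_eq_mul]; ring
  have hqi := haniso i hi0
  have hqj := haniso j hj0
  have quadi : mul i i = -(q i • one) := by
    have h := L2l i one
    rw [(hone i).2, hti] at h
    rw [h]; module
  have quadj : mul j j = -(q j • one) := by
    have h := L2l j one
    rw [(hone j).2, htj] at h
    rw [h]; module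
  have hK0 : mul i j ≠ 0 := by
    intro h
    apply hj0
    have hinj := (hdiv i hi0).1.1
    have : mul i j = mul i 0 := by simpa using h
    exact hinj this
  -- anticommutation
  have hqadd : q (i + j) = q i + q j := by
    have h := hbij
    simp only [QuadraticMap.polar] at h
    linear_combination h
  have hsum : mul i j + mul j i = 0 := by
    have h := L2l (i + j) one
    rw [(hone (i+j)).2] at h
    simp only [map_add, LinearMap.add_apply] at h
    rw [polar_add_left, hti, htj, hqadd] at h
    have h2 : mul i j + mul j i
        = ((0:k)+0) • (i+j) - (q i + q j) • one - mul i i - mul j j := by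
      rw [← h]; abel
    rw [quadi, quadj] at h2
    rw [h2]; module
  have anti : mul j i = -(mul i j) := eq_neg_of_add_eq_zero_left (by rw [add_comm]; exact hsum)
  -- orthogonality of K
  have tK : polar (⇑q) (mul i j) one = 0 := by
    have h := L1a i j one
    rw [(hone i).2, hti, htj] at h
    rw [polar_comm (⇑q) j i] at h
    rw [hbij] at h
    linear_combination h
  have bKi : polar (⇑q) (mul i j) i = 0 := by
    have h := L1a i j i
    rw [quadi, hti, hbji] at h
    rw [polar_neg_right, polar_smul_right, htj] at h
    simp only [smul_eq_mul, mul_zero, zero_mul, add_zero, neg_zero, neg_neg] at h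
    exact h
  have bKj : polar (⇑q) (mul i j) j = 0 := by
    have h := L1a i j j
    rw [hti] at h
    rw [polar_comm (⇑q) j (mul i j)] at h
    have h2 : (2:k) * polar (⇑q) (mul i j) j = 0 := by linear_combination h
    exact (mul_eq_zero.mp h2).resolve_left hchar
  -- multiplication table entries
  have t13' : mul i (mul i j) = -(q i) • j := by
    have h := L2l i j
    rw [hti] at h
    rw [h]; module
  have t31' : mul (mul i j) i = q i • j := by
    have h := L2r i j
    rw [hti, anti] at h
    simp only [LinearMap.map_neg₂, zero_smul, zero_sub] at h
    exact neg_inj.mp h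
  have t23' : mul j (mul i j) = q j • i := by
    have h := L2l j i
    rw [htj, anti] at h
    simp only [_root_.map_neg, zero_smul, zero_sub] at h
    exact neg_inj.mp h
  have t32' : mul (mul i j) j = -(q j) • i := by
    have h := L2r j i
    rw [htj] at h
    rw [h]; module
  have t33' : mul (mul i j) (mul i j) = -((q i * q j) • one) := by
    have h := L2l (mul i j) one
    rw [(hone (mul i j)).2, tK] at h
    rw [h, hmul]; module
  -- linear independence
  have hli : LinearIndependent k ![one, i, j, mul i j] := by
    rw [Fintype.linearIndependent_iff]
    intro g hg
    rw [Fin.sum_univ_four] at hg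
    simp only [Matrix.cons_val_zero, Matrix.cons_val_one, Matrix.head_cons,
      Matrix.cons_val_two, Matrix.tail_cons, Matrix.cons_val_three] at hg
    have h0 := congrArg (fun w => polar (⇑q) w one) hg
    have h1 := congrArg (fun w => polar (⇑q) w i) hg
    have h2 := congrArg (fun w => polar (⇑q) w j) hg
    have h3 := congrArg (fun w => polar (⇑q) w (mul i j)) hg
    simp only [polar_add_left, polar_smul_left, smul_eq_mul, polar_zero_left] at h0 h1 h2 h3
    rw [hself, hti, htj, tK, hq1] at h0
    rw [polar_comm (⇑q) one i, hti, hself, hbji, bKi] at h1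
    rw [polar_comm (⇑q) one j, htj, hbij, hself, bKj] at h2
    rw [polar_comm (⇑q) one (mul i j), tK, polar_comm (⇑q) i (mul i j), bKi,
      polar_comm (⇑q) j (mul i j), bKj, hself, hmul] at h3
    have hg0 : g 0 = 0 := by
      have : (2:k) * g 0 = 0 := by linear_combination h0
      exact (mul_eq_zero.mp this).resolve_left hchar
    have hg1 : g 1 = 0 := by
      have : ((2:k) * q i) * g 1 = 0 := by linear_combination h1
      exact (mul_eq_zero.mp this).resolve_left (mul_ne_zero hchar hqi)
    have hg2 : g 2 = 0 := by
      have : ((2:k) * q j) * g 2 = 0 := by linear_combination h2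
      exact (mul_eq_zero.mp this).resolve_left (mul_ne_zero hchar hqj)
    have hg3 : g 3 = 0 := by
      have : ((2:k) * (q i * q j)) * g 3 = 0 := by linear_combination h3
      exact (mul_eq_zero.mp this).resolve_left
        (mul_ne_zero hchar (mul_ne_zero hqi hqj))
    intro p
    fin_cases p <;> assumption
  have hcard : Fintype.card (Fin 4) = finrank k A := by simp [h4]
  let e : Basis (Fin 4) k A := basisOfLinearIndependentOfCardEqFinrank hli hcard
  have he : ⇑e = ![one, i, j, mul i j] :=
    coe_basisOfLinearIndependentOfCardEqFinrank hli hcard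
  have he0 : e 0 = one := by rw [he]; rfl
  have he1 : e 1 = i := by rw [he]; rfl
  have he2 : e 2 = j := by rw [he]; rfl
  have he3 : e 3 = mul i j := by rw [he]; rfl
  refine ⟨⟨-(q i), -(q j), neg_ne_zero.mpr hqi, neg_ne_zero.mpr hqj, e, he0,
    ?_, ?_, ?_, ?_, ?_, ?_, ?_, ?_, ?_⟩⟩
  · rw [he1, he0, quadi] <;> module
  · rw [he1, he2, he3]
  · rw [he1, he2, he3, t13'] <;> module
  · rw [he1, he2, he3, anti]
  · rw [he2, he0, quadj] <;> module
  · rw [he1, he2, he3, t23'] <;> module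
  · rw [he1, he2, he3, t31'] <;> module
  · rw [he1, he2, he3, t32'] <;> module
  · rw [he3, he0, t33'] <;> module


end QuatData
end QuatSection

/-- Let `k` be a field of characteristic ≠ 2 and `A` a 4-dimensional unital
`k`-algebra. Then `A` is an associative division algebra with center `k·1` admitting a
Kleinian pair if and only if `A` is a division algebra admitting a non-degenerate
multiplicative quadratic form `q : A → k`, i.e. a 4-dimensional Hurwitz division algebra. -/
theorem central_skewfield_iff_hurwitz (hchar : (2 : k) ≠ 0)
    (A : Type) [AddCommGroup A] [Module k A] [FiniteDimensional k A]
    (mul : A →ₗ[k] A →ₗ[k] A) (one : A)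
    (h4 : finrank k A = 4)
    (hone : ∀ x : A, mul one x = x ∧ mul x one = x) :
    ((∀ x y z : A, mul (mul x y) z = mul x (mul y z)) ∧
     (∀ a : A, a ≠ 0 →
       Function.Bijective (fun x => mul a x) ∧ Function.Bijective (fun x => mul x a)) ∧
     ({z : A | ∀ x : A, mul z x = mul x z} = Set.range (fun s : k => s • one)) ∧
     (∃ α β : A ≃ₗ[k] A, IsKleinPair mul α β)) ↔
    ((∀ a : A, a ≠ 0 →
       Function.Bijective (fun x => mul a x) ∧ Function.Bijective (fun x => mul x a)) ∧
     (∃ q : QuadraticForm k A,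
       (∀ x : A, (∀ y : A, QuadraticMap.polar (⇑q) x y = 0) → x = 0) ∧
       (∀ x y : A, q (mul x y) = q x * q y))) := by
  constructor
  · rintro ⟨hassoc, hdiv, hcen, α, β, hkp⟩
    obtain ⟨D⟩ := QuatData.ofCentral hchar h4 hone hassoc hdiv hcen α β hkp
    exact ⟨hdiv, D.Q, D.Q_nondeg hchar, D.Q_mul hone⟩
  · rintro ⟨hdiv, q, hnd, hmulq⟩
    obtain ⟨D⟩ := QuatData.ofHurwitz hchar h4 hone hdiv q hnd hmulq
    exact ⟨D.assoc hone, hdiv, D.center_eq hchar hone, D.klein_exists hchar hone⟩
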